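/- Let $X$ be a geodesic metric space with strong upper gradient $|\nabla \cdot|$, $a, b > 0$, $p = e^b$, $q = p/(p-1)$, $C_b = p^{1-q}/q$. Let $\varphi \in C^1([0,1], \mathrm{Lip}_b(X))$ be positive, bounded away from 0, and satisfy $\partial_s\varphi_s + a\varphi_s|\nabla\ln\varphi_s|^2 + b\varphi_s\ln\varphi_s \le 0$. Then for any $x_0, x_1 \in X$, $\varphi_1(x_1) - \varphi_0(x_0) \le C_b \exp\left(\frac{d(x_0,x_1)^2}{4ab}\right)$. -/

import Mathlib

set_option maxHeartbeats 1000000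
open Filter

/-- The local Lipschitz slope, the strong upper gradient used in the paper. -/
noncomputable def lipSlope {X : Type*} [MetricSpace X] (f : X → ℝ) (x : X) : ℝ :=
  Filter.limsup (fun y => |f x - f y| / dist x y) (nhdsWithin x {x}ᶜ)

private theorem abs_log_sub_log_le' {c a b : ℝ} (hc : 0 < c) (ha : c ≤ a) (hb : c ≤ b) :
    |Real.log a - Real.log b| ≤ |a - b| / c := by
  have ha0 : 0 < a := lt_of_lt_of_le hc ha
  have hb0 : 0 < b := lt_of_lt_of_le hc hb
  have main : ∀ u v : ℝ, c ≤ u → c ≤ v → u ≤ v →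
      Real.log v - Real.log u ≤ (v - u) / c := by
    intro u v hu hv huv
    have hu0 : 0 < u := lt_of_lt_of_le hc hu
    have hv0 : 0 < v := lt_of_lt_of_le hc hv
    have h1 : Real.log v - Real.log u = Real.log (v / u) :=
      (Real.log_div hv0.ne' hu0.ne').symm
    have h2 : Real.log (v / u) ≤ v / u - 1 := Real.log_le_sub_one_of_pos (by positivity)
    have h3 : v / u - 1 = (v - u) / u := by field_simp
    have h4 : (v - u) / u ≤ (v - u) / c :=
      div_le_div_of_nonneg_left (by linarith) hc hu
    linarith [h1, h2, h3 ▸ h2]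
  rcases le_total a b with h | h
  · have hlog : Real.log a ≤ Real.log b := Real.log_le_log ha0 h
    rw [abs_of_nonpos (by linarith), abs_of_nonpos (by linarith)]
    have h5 := main a b ha hb h
    have h6 : -(a - b) / c = (b - a) / c := by ring
    linarith
  · have hlog : Real.log b ≤ Real.log a := Real.log_le_log hb0 h
    rw [abs_of_nonneg (by linarith), abs_of_nonneg (by linarith)]
    exact main b a hb ha h

/-- Upper bound in Proposition 5.13: in a geodesic space, for a positive `C¹`
family of bounded Lipschitz functions `φ` bounded away from `0` satisfying
`∂_s φ_s + a φ_s |∇ ln φ_s|² + b φ_s ln φ_s ≤ 0`, one has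
`φ₁(x₁) - φ₀(x₀) ≤ C_b exp(d(x₀,x₁)²/(4ab))`. -/
theorem stmt_18 {X : Type*} [MetricSpace X]
    (hgeo : ∀ x y : X, ∃ γ : ℝ → X, γ 0 = x ∧ γ 1 = y ∧
      ∀ s ∈ Set.Icc (0:ℝ) 1, ∀ t ∈ Set.Icc (0:ℝ) 1,
        dist (γ s) (γ t) = |s - t| * dist x y)
    (a b p q Cb : ℝ) (ha : 0 < a) (hb : 0 < b)
    (hp : p = Real.exp b) (hq : q = p / (p - 1)) (hCb : Cb = p ^ (1 - q) / q)
    (φ φ' : ℝ → X → ℝ)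
    (hC1 : ∀ x : X, ∀ s ∈ Set.Icc (0:ℝ) 1, HasDerivAt (fun u => φ u x) (φ' s x) s)
    (hLip : ∃ K, ∀ s ∈ Set.Icc (0:ℝ) 1, LipschitzWith K (φ s))
    (hbd : ∃ M, ∀ s ∈ Set.Icc (0:ℝ) 1, ∀ x : X, |φ s x| ≤ M)
    (hlb : ∃ ε > 0, ∀ s ∈ Set.Icc (0:ℝ) 1, ∀ x : X, ε ≤ φ s x)
    (hcont : Continuous fun pr : ℝ × X => φ' pr.1 pr.2)
    (hsub : ∀ s ∈ Set.Icc (0:ℝ) 1, ∀ x : X,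
      φ' s x + a * φ s x * (lipSlope (fun z => Real.log (φ s z)) x) ^ 2 +
        b * φ s x * Real.log (φ s x) ≤ 0) :
    ∀ x₀ x₁ : X, φ 1 x₁ - φ 0 x₀ ≤ Cb * Real.exp (dist x₀ x₁ ^ 2 / (4 * a * b)) := by
  obtain ⟨K, hK⟩ := hLip
  obtain ⟨ε₀, hε₀, hlb'⟩ := hlb
  have hK0 : (0:ℝ) ≤ (K:ℝ) := K.coe_nonneg
  have hφpos : ∀ s ∈ Set.Icc (0:ℝ) 1, ∀ x : X, 0 < φ s x :=
    fun s hs x => lt_of_lt_of_le hε₀ (hlb' s hs x)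
  intro x₀ x₁
  obtain ⟨γ, hγ0, hγ1, hγd⟩ := hgeo x₀ x₁
  set d : ℝ := dist x₀ x₁ with hd
  have hd0 : 0 ≤ d := dist_nonneg
  set r : ℝ := d ^ 2 / (4 * a) with hr
  -- mean value theorem helper
  have hMVT : ∀ (g g' : ℝ → ℝ), (∀ t ∈ Set.Icc (0:ℝ) 1, HasDerivAt g (g' t) t) →
      ∀ s ∈ Set.Icc (0:ℝ) 1, ∀ z ∈ Set.Icc (0:ℝ) 1, s < z →
      ∃ ξ ∈ Set.Ioo s z, g z - g s = g' ξ * (z - s) := by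
    intro g g' hg s hs z hz hsz
    have hsub1 : Set.Icc s z ⊆ Set.Icc (0:ℝ) 1 := Set.Icc_subset_Icc hs.1 hz.2
    obtain ⟨c, hc, hc'⟩ := exists_hasDerivAt_eq_slope g g' hsz
      (fun t ht => (hg t (hsub1 ht)).continuousAt.continuousWithinAt)
      (fun t ht => hg t (hsub1 (Set.mem_Icc.2 ⟨ht.1.le, ht.2.le⟩)))
    refine ⟨c, hc, ?_⟩
    rw [hc', div_mul_cancel₀ _ (sub_ne_zero.2 hsz.ne')]
  have hMVT' : ∀ (g g' : ℝ → ℝ), (∀ t ∈ Set.Icc (0:ℝ) 1, HasDerivAt g (g' t) t) →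
      ∀ s ∈ Set.Icc (0:ℝ) 1, ∀ z ∈ Set.Icc (0:ℝ) 1, s ≠ z →
      ∃ ξ, (ξ ∈ Set.Icc (0:ℝ) 1 ∧ |ξ - s| ≤ |z - s|) ∧ g z - g s = g' ξ * (z - s) := by
    intro g g' hg s hs z hz hne
    rcases lt_or_gt_of_ne hne with h | h
    · obtain ⟨ξ, hξ, he⟩ := hMVT g g' hg s hs z hz h
      exact ⟨ξ, ⟨⟨le_trans hs.1 hξ.1.le, le_trans hξ.2.le hz.2⟩, by
        rw [abs_of_pos (by linarith [hξ.1]), abs_of_pos (by linarith)]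
        linarith [hξ.2]⟩, he⟩
    · obtain ⟨ξ, hξ, he⟩ := hMVT g g' hg z hz s hs h
      refine ⟨ξ, ⟨⟨le_trans hz.1 hξ.1.le, le_trans hξ.2.le hs.2⟩, by
        rw [abs_of_neg (by linarith [hξ.2]), abs_of_neg (by linarith)]
        linarith [hξ.1]⟩, by linarith [he]⟩
  -- joint continuity of φ on Icc 0 1 × X
  have hφjc : ∀ s ∈ Set.Icc (0:ℝ) 1, ∀ x : X, ∀ δ : ℝ, 0 < δ → ∃ η > 0,
      ∀ t ∈ Set.Icc (0:ℝ) 1, ∀ z : X, |t - s| < η → dist z x < η →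
        |φ t z - φ s x| < δ := by
    intro s hs x δ hδ
    obtain ⟨η₀, hη₀, hball⟩ :=
      Metric.continuousAt_iff.1 (hcont.continuousAt (x := (s, x))) 1 one_pos
    set C : ℝ := |φ' s x| + 1 with hC
    have hC1' : 1 ≤ C := by rw [hC]; linarith [abs_nonneg (φ' s x)]
    refine ⟨min η₀ (δ / (C + (K:ℝ) + 1)), lt_min hη₀ (by positivity), ?_⟩
    intro t ht z htz hzx
    have htη : |t - s| < η₀ := lt_of_lt_of_le htz (min_le_left _ _)
    have hzη : dist z x < η₀ := lt_of_lt_of_le hzx (min_le_left _ _)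
    have hbound : ∀ ξ ∈ Set.Icc (0:ℝ) 1, |ξ - s| ≤ |t - s| → |φ' ξ z| ≤ C := by
      intro ξ _ hξ
      have hdist : dist ((ξ, z) : ℝ × X) (s, x) < η₀ := by
        rw [Prod.dist_eq]
        exact max_lt (lt_of_le_of_lt (by rwa [Real.dist_eq]) htη) hzη
      have := hball hdist
      rw [Real.dist_eq] at this
      have h1 : |φ' ξ z - φ' s x| < 1 := this
      calc |φ' ξ z| = |φ' s x + (φ' ξ z - φ' s x)| := by ring_nf
        _ ≤ |φ' s x| + |φ' ξ z - φ' s x| := abs_add_le _ _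
        _ ≤ C := by rw [hC]; linarith
    have hterm1 : |φ t z - φ s z| ≤ C * |t - s| := by
      rcases eq_or_ne s t with rfl | hne
      · simp
      · obtain ⟨ξ, ⟨hξI, hξd⟩, he⟩ := hMVT' (fun τ => φ τ z) (fun τ => φ' τ z)
          (fun τ hτ => hC1 z τ hτ) s hs t ht hne
        rw [he, abs_mul]
        exact mul_le_mul (hbound ξ hξI hξd) le_rfl (abs_nonneg _)
          (le_trans (abs_nonneg _) (hbound ξ hξI hξd))
    have hterm2 : |φ s z - φ s x| ≤ (K:ℝ) * dist z x := by
      have := (hK s hs).dist_le_mul z x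
      rwa [Real.dist_eq] at this
    have hmm : |t - s| < δ / (C + (K:ℝ) + 1) := lt_of_lt_of_le htz (min_le_right _ _)
    have hmm2 : dist z x < δ / (C + (K:ℝ) + 1) := lt_of_lt_of_le hzx (min_le_right _ _)
    have hds : (0:ℝ) ≤ dist z x := dist_nonneg
    have hkey : C * |t - s| + (K:ℝ) * dist z x < δ := by
      have h1 : C * |t - s| ≤ C * (δ / (C + (K:ℝ) + 1)) :=
        mul_le_mul_of_nonneg_left hmm.le (by linarith)
      have h2 : (K:ℝ) * dist z x ≤ (K:ℝ) * (δ / (C + (K:ℝ) + 1)) :=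
        mul_le_mul_of_nonneg_left hmm2.le hK0
      have h3 : (C + (K:ℝ)) * (δ / (C + (K:ℝ) + 1)) < δ := by
        rw [div_eq_mul_inv]
        rw [show (C + (K:ℝ)) * (δ * (C + (K:ℝ) + 1)⁻¹) = δ * ((C + (K:ℝ)) / (C + (K:ℝ) + 1)) by
          rw [div_eq_mul_inv]; ring]
        nlinarith [div_lt_one (show (0:ℝ) < C + (K:ℝ) + 1 by linarith) |>.2
          (show C + (K:ℝ) < C + (K:ℝ) + 1 by linarith)]
      nlinarith
    calc |φ t z - φ s x| = |(φ t z - φ s z) + (φ s z - φ s x)| := by ring_nf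
      _ ≤ |φ t z - φ s z| + |φ s z - φ s x| := abs_add_le _ _
      _ ≤ C * |t - s| + (K:ℝ) * dist z x := add_le_add hterm1 hterm2
      _ < δ := hkey
  obtain ⟨y, hy⟩ : ∃ y : ℝ → ℝ, y = fun s => φ s (γ s) := ⟨_, rfl⟩
  have hypos : ∀ s ∈ Set.Icc (0:ℝ) 1, ε₀ ≤ y s := by
    intro s hs; rw [hy]; exact hlb' s hs (γ s)
  have hypos' : ∀ s ∈ Set.Icc (0:ℝ) 1, 0 < y s := fun s hs => lt_of_lt_of_le hε₀ (hypos s hs)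
  have hγdist : ∀ s ∈ Set.Icc (0:ℝ) 1, ∀ z ∈ Set.Icc (0:ℝ) 1,
      dist (γ z) (γ s) = |z - s| * d := fun s hs z hz => hγd z hz s hs
  have hycont : ContinuousOn y (Set.Icc (0:ℝ) 1) := by
    rw [hy]
    intro s hs
    rw [Metric.continuousWithinAt_iff]
    intro δ hδ
    obtain ⟨η, hη, hjc⟩ := hφjc s hs (γ s) δ hδ
    refine ⟨η / (d + 1), by positivity, ?_⟩
    intro z hz hzd
    rw [Real.dist_eq] at hzd
    have h1 : |z - s| < η := lt_of_lt_of_le hzd (div_le_self hη.le (by linarith))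
    have h2 : dist (γ z) (γ s) < η := by
      rw [hγdist s hs z hz]
      have hA : |z - s| * d ≤ (η / (d + 1)) * d := mul_le_mul_of_nonneg_right hzd.le hd0
      have hB : (η / (d + 1)) * d < η := by
        rw [div_mul_eq_mul_div, div_lt_iff₀ (by linarith)]
        nlinarith
      linarith
    rw [Real.dist_eq]
    exact hjc z hz (γ z) h1 h2
  have hucont : ContinuousOn (fun s => Real.log (y s)) (Set.Icc (0:ℝ) 1) :=
    hycont.log (fun s hs => (hypos' s hs).ne')
  -- continuity of the logarithmic time-derivative quotient
  have hψ : ∀ s ∈ Set.Icc (0:ℝ) 1, ∀ δ : ℝ, 0 < δ → ∃ η > 0,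
      ∀ t ∈ Set.Icc (0:ℝ) 1, ∀ z : X, |t - s| < η → dist z (γ s) < η →
        |φ' t z / φ t z - φ' s (γ s) / φ s (γ s)| < δ := by
    intro s hs δ hδ
    set L := φ' s (γ s) / φ s (γ s) with hL
    obtain ⟨η₁, hη₁, hb1⟩ := Metric.continuousAt_iff.1
      (hcont.continuousAt (x := (s, γ s))) (δ * ε₀ / 4) (by positivity)
    obtain ⟨η₂, hη₂, hb2⟩ := hφjc s hs (γ s) (δ * ε₀ / (4 * (|L| + 1))) (by positivity)
    refine ⟨min η₁ η₂, lt_min hη₁ hη₂, ?_⟩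
    intro t ht z h1 h2
    have hφt : ε₀ ≤ φ t z := hlb' t ht z
    have hφt0 : 0 < φ t z := lt_of_lt_of_le hε₀ hφt
    have he1 : |φ' t z - φ' s (γ s)| < δ * ε₀ / 4 := by
      have hdp : dist ((t, z) : ℝ × X) (s, γ s) < η₁ := by
        rw [Prod.dist_eq]
        exact max_lt (lt_of_lt_of_le (by rwa [Real.dist_eq]) (min_le_left _ _))
          (lt_of_lt_of_le h2 (min_le_left _ _))
      have := hb1 hdp
      rwa [Real.dist_eq] at this
    have he2 : |φ t z - φ s (γ s)| < δ * ε₀ / (4 * (|L| + 1)) :=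
      hb2 t ht z (lt_of_lt_of_le h1 (min_le_right _ _)) (lt_of_lt_of_le h2 (min_le_right _ _))
    have hLmul : L * φ s (γ s) = φ' s (γ s) :=
      div_mul_cancel₀ _ (hφpos s hs (γ s)).ne'
    have hiden : φ' t z - L * φ t z =
        (φ' t z - φ' s (γ s)) + L * (φ s (γ s) - φ t z) := by
      linear_combination -hLmul
    have hnum : |φ' t z - L * φ t z| ≤
        |φ' t z - φ' s (γ s)| + |L| * |φ s (γ s) - φ t z| := by
      rw [hiden]
      refine le_trans (abs_add_le _ _) ?_
      rw [abs_mul]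
    have h4 : |L| * (δ * ε₀ / (4 * (|L| + 1))) ≤ δ * ε₀ / 4 := by
      have hpos4 : (0:ℝ) < 4 * (|L| + 1) := by positivity
      have hA : |L| * (δ * ε₀ / (4 * (|L| + 1))) = (δ * ε₀) * (|L| / (4 * (|L| + 1))) := by
        ring
      have h7 : |L| / (4 * (|L| + 1)) ≤ 1/4 := by
        rw [div_le_div_iff₀ hpos4 (by norm_num)]
        nlinarith [abs_nonneg L]
      calc |L| * (δ * ε₀ / (4 * (|L| + 1))) = (δ * ε₀) * (|L| / (4 * (|L| + 1))) := hA
        _ ≤ (δ * ε₀) * (1/4) := mul_le_mul_of_nonneg_left h7 (by positivity)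
        _ = δ * ε₀ / 4 := by ring
    have h5 : |φ' t z - L * φ t z| < δ * ε₀ / 2 := by
      have := mul_le_mul_of_nonneg_left he2.le (abs_nonneg L)
      have hc2 : |φ s (γ s) - φ t z| = |φ t z - φ s (γ s)| := abs_sub_comm _ _
      rw [hc2] at hnum
      linarith
    have heq : φ' t z / φ t z - L = (φ' t z - L * φ t z) / φ t z := by
      field_simp
    rw [heq, abs_div, abs_of_pos hφt0, div_lt_iff₀ hφt0]
    have h8 : δ * ε₀ ≤ δ * φ t z := mul_le_mul_of_nonneg_left hφt hδ.le
    have h9 : 0 < δ * ε₀ := mul_pos hδ hε₀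
    linarith
  -- the central differential inequality along the geodesic
  have key : ∀ s ∈ Set.Ico (0:ℝ) 1, ∀ ρ : ℝ, r - b * Real.log (y s) < ρ →
      ∀ᶠ z in nhdsWithin s (Set.Ioi s),
        Real.log (y z) - Real.log (y s) < ρ * (z - s) := by
    intro s hs ρ hρ
    have hsI : s ∈ Set.Icc (0:ℝ) 1 := ⟨hs.1, hs.2.le⟩
    obtain ⟨S, hS⟩ : ∃ S, S = lipSlope (fun z => Real.log (φ s z)) (γ s) := ⟨_, rfl⟩
    obtain ⟨L, hL⟩ : ∃ L, L = φ' s (γ s) / φ s (γ s) := ⟨_, rfl⟩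
    have hys : 0 < y s := hypos' s hsI
    have hLle : L ≤ -(a * S^2) - b * Real.log (y s) := by
      have hyy : y s = φ s (γ s) := by rw [hy]
      rw [hL, hyy, div_le_iff₀ (hyy ▸ hys)]
      have h0 := hsub s hsI (γ s)
      rw [← hS] at h0
      nlinarith [h0, hyy ▸ hys]
    obtain ⟨T, hT⟩ : ∃ T, T = L + d * S := ⟨_, rfl⟩
    have hTle : T ≤ r - b * Real.log (y s) := by
      have hsq : 0 ≤ (2*a*S - d)^2 := sq_nonneg _
      have hds : d * S - a * S^2 ≤ r := by
        rw [hr, le_div_iff₀ (by linarith : (0:ℝ) < 4*a)]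
        nlinarith
      linarith
    have hTρ : T < ρ := lt_of_le_of_lt hTle hρ
    obtain ⟨δ, hδdef⟩ : ∃ δ, δ = (ρ - T) / (2 * (1 + d)) := ⟨_, rfl⟩
    have hδ : 0 < δ := by
      rw [hδdef]; apply div_pos <;> linarith
    have E1 : ∀ᶠ z in nhdsWithin s (Set.Ioi s), z ∈ Set.Ioc s 1 :=
      Ioc_mem_nhdsGT_of_mem ⟨le_rfl, hs.2⟩
    -- claim A : the time-derivative part
    have E2 : ∀ᶠ z in nhdsWithin s (Set.Ioi s),
        Real.log (φ z (γ z)) - Real.log (φ s (γ z)) ≤ (L + δ) * (z - s) := by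
      obtain ⟨η, hη, hψs⟩ := hψ s hsI δ hδ
      have hm : s < min 1 (s + η / (2 * (d + 1))) :=
        lt_min hs.2 (by have : 0 < η / (2 * (d + 1)) := by positivity
                        linarith)
      filter_upwards [Ioc_mem_nhdsGT_of_mem ⟨le_rfl, hm⟩] with z hz
      have hzs : s < z := hz.1
      have hz1 : z ≤ 1 := le_trans hz.2 (min_le_left _ _)
      have hz2 : z ≤ s + η / (2 * (d + 1)) := le_trans hz.2 (min_le_right _ _)
      have hzI : z ∈ Set.Icc (0:ℝ) 1 := ⟨le_trans hs.1 hzs.le, hz1⟩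
      obtain ⟨ξ, hξ, he⟩ := hMVT (fun t => Real.log (φ t (γ z)))
        (fun t => φ' t (γ z) / φ t (γ z))
        (fun t ht => (hC1 (γ z) t ht).log (hφpos t ht (γ z)).ne')
        s hsI z hzI hzs
      have hξI : ξ ∈ Set.Icc (0:ℝ) 1 := ⟨le_trans hsI.1 hξ.1.le, le_trans hξ.2.le hzI.2⟩
      have hξ1 : |ξ - s| < η := by
        rw [abs_of_pos (by linarith [hξ.1] : (0:ℝ) < ξ - s)]
        have h3 : η / (2 * (d + 1)) ≤ η := div_le_self hη.le (by linarith)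
        linarith [hξ.2]
      have hξ2 : dist (γ z) (γ s) < η := by
        rw [hγdist s hsI z hzI, abs_of_pos (by linarith : (0:ℝ) < z - s)]
        have h4 : (z - s) * d ≤ (η / (2 * (d + 1))) * d :=
          mul_le_mul_of_nonneg_right (by linarith) hd0
        have h5 : (η / (2 * (d + 1))) * d < η := by
          rw [div_mul_eq_mul_div, div_lt_iff₀ (by linarith)]
          nlinarith
        linarith
      have hψb := hψs ξ hξI (γ z) hξ1 hξ2
      rw [← hL] at hψb
      have h6 : φ' ξ (γ z) / φ ξ (γ z) ≤ L + δ := by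
        have := abs_lt.1 hψb
        linarith [this.2]
      rw [he]
      exact mul_le_mul_of_nonneg_right h6 (by linarith)
    -- claim B : the spatial part
    have E3 : ∀ᶠ z in nhdsWithin s (Set.Ioi s),
        Real.log (φ s (γ z)) - Real.log (φ s (γ s)) ≤ (S + δ) * (d * (z - s)) := by
      rcases eq_or_lt_of_le hd0 with hd0eq | hdpos
      · filter_upwards [E1] with z hz
        have hzI : z ∈ Set.Icc (0:ℝ) 1 := ⟨le_trans hs.1 hz.1.le, hz.2⟩
        have hγeq : γ z = γ s := by
          have h7 : dist (γ z) (γ s) = 0 := by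
            rw [hγdist s hsI z hzI, ← hd0eq, mul_zero]
          exact dist_eq_zero.1 h7
        rw [hγeq, ← hd0eq, sub_self]; simp
      · obtain ⟨g, hg⟩ : ∃ g : X → ℝ,
            g = fun w => |Real.log (φ s (γ s)) - Real.log (φ s w)| / dist (γ s) w := ⟨_, rfl⟩
        have hgbd : ∀ w, g w ≤ (K:ℝ)/ε₀ := by
          intro w
          rcases eq_or_ne (dist (γ s) w) 0 with h0 | h0
          · have : γ s = w := dist_eq_zero.1 h0
            rw [hg]
            simp only [this, sub_self, abs_zero, zero_div]
            positivity
          · have hdistpos : 0 < dist (γ s) w := lt_of_le_of_ne dist_nonneg (Ne.symm h0)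
            have hnum : |Real.log (φ s (γ s)) - Real.log (φ s w)| ≤
                |φ s (γ s) - φ s w| / ε₀ :=
              abs_log_sub_log_le' hε₀ (hlb' s hsI (γ s)) (hlb' s hsI w)
            have hlip : |φ s (γ s) - φ s w| ≤ (K:ℝ) * dist (γ s) w := by
              have := (hK s hsI).dist_le_mul (γ s) w
              rwa [Real.dist_eq] at this
            rw [hg, div_le_div_iff₀ hdistpos hε₀]
            have h1 : |Real.log (φ s (γ s)) - Real.log (φ s w)| * ε₀ ≤
                (|φ s (γ s) - φ s w| / ε₀) * ε₀ :=
              mul_le_mul_of_nonneg_right hnum hε₀.le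
            rw [div_mul_cancel₀ _ hε₀.ne'] at h1
            calc |Real.log (φ s (γ s)) - Real.log (φ s w)| * ε₀ ≤ |φ s (γ s) - φ s w| := h1
              _ ≤ (K:ℝ) * dist (γ s) w := hlip
        have hbdd : Filter.IsBoundedUnder (· ≤ ·) (nhdsWithin (γ s) {γ s}ᶜ) g :=
          Filter.isBoundedUnder_of ⟨(K:ℝ)/ε₀, hgbd⟩
        have hSlim : Filter.limsup g (nhdsWithin (γ s) {γ s}ᶜ) = S := by rw [hg, hS]; rfl
        have hev : ∀ᶠ w in nhdsWithin (γ s) {γ s}ᶜ, g w < S + δ := by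
          refine eventually_lt_of_limsup_lt ?_ hbdd
          rw [hSlim]; linarith
        have htend : Filter.Tendsto γ (nhdsWithin s (Set.Ioi s))
            (nhdsWithin (γ s) {γ s}ᶜ) := by
          rw [tendsto_nhdsWithin_iff]
          constructor
          · rw [Metric.tendsto_nhds]
            intro ε hε
            have hm : s < min 1 (s + ε / (d + 1)) :=
              lt_min hs.2 (by have : 0 < ε / (d + 1) := by positivity
                              linarith)
            filter_upwards [Ioc_mem_nhdsGT_of_mem ⟨le_rfl, hm⟩] with z hz
            have hzI : z ∈ Set.Icc (0:ℝ) 1 :=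
              ⟨le_trans hs.1 hz.1.le, le_trans hz.2 (min_le_left _ _)⟩
            rw [hγdist s hsI z hzI, abs_of_pos (by linarith [hz.1] : (0:ℝ) < z - s)]
            have h2 : z - s ≤ ε/(d+1) := by
              have := le_trans hz.2 (min_le_right _ _); linarith
            calc (z - s) * d ≤ (ε/(d+1)) * d := mul_le_mul_of_nonneg_right h2 hd0
              _ < ε := by
                rw [div_mul_eq_mul_div, div_lt_iff₀ (by linarith)]
                nlinarith
          · filter_upwards [E1] with z hz
            have hzI : z ∈ Set.Icc (0:ℝ) 1 := ⟨le_trans hs.1 hz.1.le, hz.2⟩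
            have hdz : dist (γ z) (γ s) = (z - s) * d := by
              rw [hγdist s hsI z hzI, abs_of_pos (by linarith [hz.1] : (0:ℝ) < z - s)]
            have hpos : 0 < dist (γ z) (γ s) := by
              rw [hdz]; exact mul_pos (by linarith [hz.1]) hdpos
            simp only [Set.mem_compl_iff, Set.mem_singleton_iff]
            intro he
            rw [he, dist_self] at hpos
            exact lt_irrefl 0 hpos
        have hevz := htend.eventually hev
        filter_upwards [E1, hevz] with z hz hgz
        have hzI : z ∈ Set.Icc (0:ℝ) 1 := ⟨le_trans hs.1 hz.1.le, hz.2⟩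
        have hdist : dist (γ s) (γ z) = (z - s) * d := by
          rw [dist_comm, hγdist s hsI z hzI,
            abs_of_pos (by linarith [hz.1] : (0:ℝ) < z - s)]
        have hdistpos : 0 < dist (γ s) (γ z) := by
          rw [hdist]; exact mul_pos (by linarith [hz.1]) hdpos
        have h1 : |Real.log (φ s (γ s)) - Real.log (φ s (γ z))| =
            g (γ z) * dist (γ s) (γ z) := by
          rw [hg]; exact (div_mul_cancel₀ _ hdistpos.ne').symm
        calc Real.log (φ s (γ z)) - Real.log (φ s (γ s))
            ≤ |Real.log (φ s (γ s)) - Real.log (φ s (γ z))| := by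
              rw [abs_sub_comm]; exact le_abs_self _
          _ = g (γ z) * dist (γ s) (γ z) := h1
          _ ≤ (S + δ) * dist (γ s) (γ z) :=
              mul_le_mul_of_nonneg_right hgz.le dist_nonneg
          _ = (S + δ) * (d * (z - s)) := by rw [hdist]; ring
    filter_upwards [E1, E2, E3] with z hz1 hz2 hz3
    have hzs : 0 < z - s := by linarith [hz1.1]
    have hsplit : Real.log (y z) - Real.log (y s) =
        (Real.log (φ z (γ z)) - Real.log (φ s (γ z))) +
        (Real.log (φ s (γ z)) - Real.log (φ s (γ s))) := by
      rw [hy]; ring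
    have hfin : (L + δ)*(z - s) + (S + δ)*(d*(z - s)) = (T + δ*(1+d))*(z-s) := by
      rw [hT]; ring
    have hδ1d : δ * (1 + d) = (ρ - T)/2 := by
      rw [hδdef]; field_simp
    have hlast : T + δ*(1+d) < ρ := by rw [hδ1d]; linarith
    have := mul_lt_mul_of_pos_right hlast hzs
    linarith [hsplit, hz2, hz3, hfin]
  -- Gronwall comparison via the fencing lemma
  obtain ⟨u0, hu0⟩ : ∃ u0, u0 = Real.log (y 0) := ⟨_, rfl⟩
  have hB' : ∀ x : ℝ, HasDerivAt (fun t => r/b + (u0 - r/b) * Real.exp (-(b*t)))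
      ((u0 - r/b) * (Real.exp (-(b*x)) * -(b*1))) x := by
    intro x
    have h1 : HasDerivAt (fun t : ℝ => b * t) (b * 1) x := (hasDerivAt_id x).const_mul b
    have h2 := (h1.neg).exp
    exact (h2.const_mul (u0 - r/b)).const_add (r/b)
  have hslope : ∀ x ∈ Set.Ico (0:ℝ) 1, ∀ ρ, (r - b * Real.log (y x)) < ρ →
      ∃ᶠ z in nhdsWithin x (Set.Ioi x), slope (fun t => Real.log (y t)) x z < ρ := by
    intro x hx ρ hρ
    have hev := key x hx ρ hρ
    refine Filter.Eventually.frequently ?_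
    filter_upwards [hev, self_mem_nhdsWithin] with z h1 h2
    have hzx : (0:ℝ) < z - x := sub_pos.2 h2
    rw [slope_def_field, div_lt_iff₀ hzx]
    linarith
  have hfence : ∀ ε' : ℝ, 0 < ε' →
      Real.log (y 1) ≤ (r/b + (u0 - r/b) * Real.exp (-(b*1))) + ε' * (1+1) := by
    intro ε' hε'
    have hBc : ContinuousOn
        (fun t => (r/b + (u0 - r/b) * Real.exp (-(b*t))) + ε' * (t+1))
        (Set.Icc (0:ℝ) 1) := by
      apply Continuous.continuousOn
      fun_prop
    have hB'' : ∀ x ∈ Set.Ico (0:ℝ) 1, HasDerivWithinAt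
        (fun t => (r/b + (u0 - r/b) * Real.exp (-(b*t))) + ε' * (t+1))
        ((u0 - r/b) * (Real.exp (-(b*x)) * -(b*1)) + ε' * 1) (Set.Ici x) x := by
      intro x _
      exact ((hB' x).add (((hasDerivAt_id x).add_const 1).const_mul ε')).hasDerivWithinAt
    have ha' : Real.log (y 0) ≤ (r/b + (u0 - r/b) * Real.exp (-(b*0))) + ε' * (0+1) := by
      simp only [mul_zero, neg_zero, Real.exp_zero, mul_one, zero_add]
      rw [← hu0]
      linarith
    have hbound : ∀ x ∈ Set.Ico (0:ℝ) 1,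
        Real.log (y x) = (r/b + (u0 - r/b) * Real.exp (-(b*x))) + ε' * (x+1) →
        (r - b * Real.log (y x)) < (u0 - r/b) * (Real.exp (-(b*x)) * -(b*1)) + ε' * 1 := by
      intro x hx heq
      rw [heq]
      have hrb : b * (r / b) = r := by field_simp
      have h1 : 0 < b * ε' := mul_pos hb hε'
      have h2 : 0 ≤ b * ε' * x := mul_nonneg h1.le hx.1
      nlinarith [hrb, h1, h2]
    have := image_le_of_liminf_slope_right_lt_deriv_boundary' (a := 0) (b := 1)
      hucont hslope ha' hBc hB'' hbound (Set.mem_Icc.2 ⟨zero_le_one, le_rfl⟩)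
    linarith [this]
  have hgron : Real.log (y 1) ≤ r/b + (u0 - r/b) * Real.exp (-b) := by
    by_contra hcon
    push_neg at hcon
    have hc : 0 < Real.log (y 1) - (r/b + (u0 - r/b) * Real.exp (-b)) := by linarith
    have := hfence ((Real.log (y 1) - (r/b + (u0 - r/b) * Real.exp (-b))) / 4)
      (by linarith)
    rw [mul_one] at this
    linarith
  -- final algebra with Young's inequality
  have h01 : (0:ℝ) ∈ Set.Icc (0:ℝ) 1 := ⟨le_rfl, zero_le_one⟩
  have h11 : (1:ℝ) ∈ Set.Icc (0:ℝ) 1 := ⟨zero_le_one, le_rfl⟩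
  have hx0pos : 0 < φ 0 x₀ := hφpos 0 h01 x₀
  have hy0 : y 0 = φ 0 x₀ := by rw [hy]; simp [hγ0]
  have hy1 : y 1 = φ 1 x₁ := by rw [hy]; simp [hγ1]
  have hp1 : 1 < p := by rw [hp]; exact Real.one_lt_exp_iff.2 hb
  have hp0 : 0 < p := lt_trans zero_lt_one hp1
  have hpq : Real.HolderConjugate p q := by
    rw [Real.holderConjugate_iff]
    refine ⟨hp1, ?_⟩
    rw [hq, inv_div]
    field_simp
    ring
  have hq0 : q ≠ 0 := hpq.symm.ne_zero
  have hθ : Real.exp (-b) = p⁻¹ := by rw [hp]; exact Real.exp_neg b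
  have hy1le : φ 1 x₁ ≤ Real.exp (r/b*(1 - p⁻¹)) * (φ 0 x₀) ^ (p⁻¹ : ℝ) := by
    have h1 : y 1 ≤ Real.exp (r/b + (u0 - r/b) * Real.exp (-b)) := by
      calc y 1 = Real.exp (Real.log (y 1)) := (Real.exp_log (hypos' 1 h11)).symm
        _ ≤ _ := Real.exp_le_exp.2 hgron
    rw [hy1] at h1
    calc φ 1 x₁ ≤ Real.exp (r/b + (u0 - r/b) * Real.exp (-b)) := h1
      _ = Real.exp (r/b*(1 - p⁻¹)) * Real.exp (Real.log (φ 0 x₀) * p⁻¹) := by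
          rw [← Real.exp_add]
          congr 1
          rw [hθ, hu0, hy0]
          ring
      _ = Real.exp (r/b*(1 - p⁻¹)) * (φ 0 x₀) ^ (p⁻¹ : ℝ) := by
          rw [Real.rpow_def_of_pos hx0pos]
  -- Young's inequality
  have hiq : 1 - p⁻¹ = q⁻¹ := hpq.one_sub_inv
  have hqinvq : q⁻¹ * q = 1 := inv_mul_cancel₀ hq0
  have hpinvq : p⁻¹ * q = q - 1 := by
    have h1 : p⁻¹ = 1 - q⁻¹ := by linarith [hpq.inv_add_inv_eq_one]
    rw [h1, sub_mul, one_mul, hqinvq]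
  have hyoung := Real.young_inequality_of_nonneg
    (mul_nonneg (Real.rpow_nonneg hx0pos.le (p⁻¹:ℝ)) (Real.rpow_nonneg hp0.le (p⁻¹:ℝ)))
    (mul_nonneg (Real.exp_pos (r/b*(1 - p⁻¹))).le (Real.rpow_nonneg hp0.le (-(p⁻¹:ℝ))))
    hpq
  have hpp : (p:ℝ) ^ (p⁻¹:ℝ) * p ^ (-(p⁻¹:ℝ)) = 1 := by
    rw [← Real.rpow_add hp0]
    simp
  have hAB : (φ 0 x₀) ^ (p⁻¹:ℝ) * p ^ (p⁻¹:ℝ) *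
      (Real.exp (r/b*(1 - p⁻¹)) * p ^ (-(p⁻¹:ℝ))) =
      Real.exp (r/b*(1 - p⁻¹)) * (φ 0 x₀) ^ (p⁻¹:ℝ) := by
    calc (φ 0 x₀) ^ (p⁻¹:ℝ) * p ^ (p⁻¹:ℝ) *
        (Real.exp (r/b*(1 - p⁻¹)) * p ^ (-(p⁻¹:ℝ)))
        = Real.exp (r/b*(1 - p⁻¹)) * (φ 0 x₀) ^ (p⁻¹:ℝ) *
          (p ^ (p⁻¹:ℝ) * p ^ (-(p⁻¹:ℝ))) := by ring
      _ = _ := by rw [hpp, mul_one]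
  have hA : ((φ 0 x₀) ^ (p⁻¹:ℝ) * p ^ (p⁻¹:ℝ)) ^ (p:ℝ) = φ 0 x₀ * p := by
    rw [Real.mul_rpow (Real.rpow_nonneg hx0pos.le _) (Real.rpow_nonneg hp0.le _),
      ← Real.rpow_mul hx0pos.le, ← Real.rpow_mul hp0.le,
      inv_mul_cancel₀ hp0.ne', Real.rpow_one, Real.rpow_one]
  have hBq : (Real.exp (r/b*(1 - p⁻¹)) * p ^ (-(p⁻¹:ℝ))) ^ (q:ℝ) =
      Real.exp (r/b) * p ^ ((1:ℝ) - q) := by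
    rw [Real.mul_rpow (Real.exp_pos _).le (Real.rpow_nonneg hp0.le _),
      ← Real.exp_mul, ← Real.rpow_mul hp0.le]
    congr 1
    · congr 1
      rw [hiq]
      calc r/b * q⁻¹ * q = r/b * (q⁻¹ * q) := by ring
        _ = r/b := by rw [hqinvq, mul_one]
    · congr 1
      rw [neg_mul, hpinvq]
      ring
  rw [hAB, hA, hBq] at hyoung
  have hxp : φ 0 x₀ * p / p = φ 0 x₀ := by field_simp
  rw [hxp] at hyoung
  have hCb' : Real.exp (r/b) * p ^ ((1:ℝ) - q) / q = Cb * Real.exp (r/b) := by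
    rw [hCb]
    ring
  rw [hCb'] at hyoung
  have hrb2 : d ^ 2 / (4*a*b) = r/b := by
    rw [hr, div_div]
  rw [hrb2]
  linarith [hy1le, hyoung]
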